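/- Let a/b and c/d be reduced fractions with gcd(b,d)=1 and d_F = |ad−bc|. If d_F divides b²+d², then the pair is inner regular, i.e. gcd(ab+cd, b²+d², a²+c²) = d_F. -/

import Mathlib

/-- If a/b, c/d are reduced fractions with gcd(b,d)=1 and the Farey determinant
d_F = |ad−bc| divides b²+d², then the pair is inner regular:
gcd(ab+cd, b²+d², a²+c²) = d_F. -/
theorem stmt_1 (a b c d : ℤ) (hb : 0 < b) (hd : 0 < d)
    (hab : Int.gcd a b = 1) (hcd : Int.gcd c d = 1) (hbd : Int.gcd b d = 1)
    (hdvd : ((a*d - b*c).natAbs : ℤ) ∣ (b^2 + d^2)) :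
    Int.gcd (a*b + c*d) (Int.gcd (b^2 + d^2) (a^2 + c^2)) = (a*d - b*c).natAbs := by
  set D : ℤ := a*d - b*c with hDdef
  have hD2 : D ∣ b^2 + d^2 := Int.natAbs_dvd.mp hdvd
  obtain ⟨u, v, huv⟩ : IsCoprime (b:ℤ) d := Int.isCoprime_iff_gcd_eq_one.mpr hbd
  -- helper: from D ∣ b*x and D ∣ d*x, get D ∣ x
  have combo : ∀ (k x : ℤ), k ∣ b*x → k ∣ d*x → k ∣ x := by
    intro k x h1 h2
    have hx : x = u*(b*x) + v*(d*x) := by linear_combination (-x) * huv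
    rw [hx]
    exact dvd_add (Dvd.dvd.mul_left h1 u) (Dvd.dvd.mul_left h2 v)
  -- D divides a*b+c*d
  have hb1 : D ∣ b*(a*b+c*d) := by
    have : b*(a*b+c*d) = a*(b^2+d^2) - d*D := by rw [hDdef]; ring
    rw [this]; exact dvd_sub (hD2.mul_left a) (dvd_mul_left D d)
  have hd1 : D ∣ d*(a*b+c*d) := by
    have : d*(a*b+c*d) = c*(b^2+d^2) + b*D := by rw [hDdef]; ring
    rw [this]; exact dvd_add (hD2.mul_left c) (dvd_mul_left D b)
  have hD1 : D ∣ a*b+c*d := combo D _ hb1 hd1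
  -- D divides a^2+c^2
  have hb3 : D ∣ b*(a^2+c^2) := by
    have : b*(a^2+c^2) = a*(a*b+c*d) - c*D := by rw [hDdef]; ring
    rw [this]; exact dvd_sub (hD1.mul_left a) (dvd_mul_left D c)
  have hd3 : D ∣ d*(a^2+c^2) := by
    have : d*(a^2+c^2) = c*(a*b+c*d) + a*D := by rw [hDdef]; ring
    rw [this]; exact dvd_add (hD1.mul_left c) (dvd_mul_left D a)
  have hD3 : D ∣ a^2+c^2 := combo D _ hb3 hd3
  set g : ℕ := Int.gcd (a*b + c*d) (Int.gcd (b^2 + d^2) (a^2 + c^2)) with hg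
  have hDg : D ∣ (g:ℤ) := Int.dvd_coe_gcd hD1 (Int.dvd_coe_gcd hD2 hD3)
  -- g divides D
  have hg1 : (g:ℤ) ∣ a*b+c*d := Int.gcd_dvd_left _ _
  have hg2 : (g:ℤ) ∣ b^2+d^2 := (Int.gcd_dvd_right _ _).trans (Int.gcd_dvd_left _ _)
  have hgb : (g:ℤ) ∣ b*D := by
    have : b*D = d*(a*b+c*d) - c*(b^2+d^2) := by rw [hDdef]; ring
    rw [this]; exact dvd_sub (hg1.mul_left d) (hg2.mul_left c)
  have hgd : (g:ℤ) ∣ d*D := by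
    have : d*D = a*(b^2+d^2) - b*(a*b+c*d) := by rw [hDdef]; ring
    rw [this]; exact dvd_sub (hg2.mul_left a) (hg1.mul_left b)
  have hgD : (g:ℤ) ∣ D := combo (g:ℤ) D hgb hgd
  have h1 : g ∣ D.natAbs := Int.natCast_dvd_natCast.mp (Int.dvd_natAbs.mpr hgD)
  have h2 : D.natAbs ∣ g := Int.natCast_dvd_natCast.mp (Int.natAbs_dvd.mpr hDg)
  exact Nat.dvd_antisymm h1 h2
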